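/- Let C̄ : (−1/2, 1/2) → (self-adjoint linear maps Sym₂ → Sym₂) be measurable and essentially bounded, with C̄(t)Ā·Ā ≥ c|Ā|² for a.e. t and all Ā ∈ Sym₂, where c > 0. Define C̄⁽ⁱ⁾ := ∫_{−1/2}^{1/2} tⁱ C̄(t) dt for i = 0, 1, 2, and Ĉ := 12( C̄⁽²⁾ − C̄⁽¹⁾(C̄⁽⁰⁾)⁻¹C̄⁽¹⁾ ). Then ĈĀ·Ā ≥ c|Ā|² for every Ā ∈ Sym₂; in particular Ĉ is positive definite and invertible. -/

import Mathlib

open Matrix MeasureTheory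
open scoped BigOperators

noncomputable section

/-- The space of real 2×2 matrices; symmetric ones form `Sym₂`. -/
abbrev M2 : Type := Matrix (Fin 2) (Fin 2) ℝ

/-- The Frobenius pairing `A·B := tr (A*B)`. -/
def dot2 (A B : M2) : ℝ := (A * B).trace

/-- The interval `(−1/2, 1/2)`. -/
def Ioo2 : Set ℝ := Set.Ioo (-(1:ℝ)/2) (1/2)

lemma dot2_eq_sum (A B : M2) : dot2 A B = ∑ α : Fin 2, ∑ β : Fin 2, A α β * B β α := by
  simp [dot2, Matrix.trace, Matrix.mul_apply, Matrix.diag, Finset.sum_comm]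

lemma dot2_comm (A B : M2) : dot2 A B = dot2 B A := Matrix.trace_mul_comm A B

lemma dot2_smul_left (r : ℝ) (A B : M2) : dot2 (r • A) B = r * dot2 A B := by
  simp [dot2, Matrix.smul_mul, Finset.mul_sum, Matrix.trace_smul, smul_eq_mul]

lemma dot2_add_left (A A' B : M2) : dot2 (A + A') B = dot2 A B + dot2 A' B := by
  simp [dot2, Matrix.add_mul, Matrix.trace_add]

lemma dot2_sub_left (A A' B : M2) : dot2 (A - A') B = dot2 A B - dot2 A' B := by
  simp [dot2, Matrix.sub_mul, Matrix.trace_sub]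

lemma dot2_smul_right (r : ℝ) (A B : M2) : dot2 A (r • B) = r * dot2 A B := by
  rw [dot2_comm, dot2_smul_left, dot2_comm]

lemma dot2_add_right (A B B' : M2) : dot2 A (B + B') = dot2 A B + dot2 A B' := by
  rw [dot2_comm, dot2_add_left, dot2_comm A B, dot2_comm A B']

lemma dot2_sub_right (A B B' : M2) : dot2 A (B - B') = dot2 A B - dot2 A B' := by
  rw [dot2_comm, dot2_sub_left, dot2_comm A B, dot2_comm A B']

lemma dot2_self_eq_sum_sq {A : M2} (hA : A.IsSymm) :
    dot2 A A = ∑ α : Fin 2, ∑ β : Fin 2, (A α β) ^ 2 := by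
  rw [dot2_eq_sum]
  refine Finset.sum_congr rfl fun α _ => Finset.sum_congr rfl fun β _ => ?_
  rw [hA.apply β α, sq]

lemma dot2_self_nonneg {A : M2} (hA : A.IsSymm) : 0 ≤ dot2 A A := by
  rw [dot2_self_eq_sum_sq hA]
  positivity

lemma dot2_self_pos {A : M2} (hA : A.IsSymm) (h0 : A ≠ 0) : 0 < dot2 A A := by
  rw [dot2_self_eq_sum_sq hA]
  obtain ⟨α, β, hαβ⟩ : ∃ α β, A α β ≠ 0 := by
    by_contra h
    push_neg at h
    exact h0 (by ext α β; simp [h])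
  have h1 : (A α β)^2 ≤ ∑ β : Fin 2, (A α β)^2 :=
    Finset.single_le_sum (f := fun β => (A α β)^2) (fun i _ => by positivity)
      (Finset.mem_univ β)
  have h2 : ∑ β : Fin 2, (A α β)^2 ≤ ∑ α : Fin 2, ∑ β : Fin 2, (A α β) ^ 2 :=
    Finset.single_le_sum (f := fun α => ∑ β : Fin 2, (A α β)^2)
      (fun i _ => by positivity) (Finset.mem_univ α)
  have h0' : (0:ℝ) < (A α β)^2 := by positivity
  linarith

lemma meas_Ioo2 : MeasurableSet Ioo2 := measurableSet_Ioo

lemma int_quad (a b g : ℝ) : ∫ t in Ioo2, (a * t ^ 2 + b * t + g) = a / 12 + g := by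
  rw [Ioo2, ← MeasureTheory.integral_Ioc_eq_integral_Ioo,
    ← intervalIntegral.integral_of_le (by norm_num : (-(1:ℝ)/2) ≤ 1/2)]
  have h1 : IntervalIntegrable (fun t : ℝ => a * t ^ 2) volume (-(1:ℝ)/2) (1/2) :=
    (continuous_const.mul (continuous_pow 2)).intervalIntegrable _ _
  have h2 : IntervalIntegrable (fun t : ℝ => b * t) volume (-(1:ℝ)/2) (1/2) :=
    (continuous_const.mul continuous_id).intervalIntegrable _ _
  have h3 : IntervalIntegrable (fun _ : ℝ => g) volume (-(1:ℝ)/2) (1/2) :=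
    intervalIntegrable_const
  rw [intervalIntegral.integral_add (h1.add h2) h3, intervalIntegral.integral_add h1 h2,
    intervalIntegral.integral_const_mul, intervalIntegral.integral_const_mul,
    integral_pow, integral_id, intervalIntegral.integral_const]
  norm_num
  ring

/-- Generic: a function with a.e. bound on `Ioo2` and measurable is integrable there. -/
lemma integrableOn_of_bound (g : ℝ → ℝ) (hg : Measurable g) (K : ℝ)
    (hb : ∀ᵐ t ∂(volume.restrict Ioo2), |g t| ≤ K) : IntegrableOn g Ioo2 volume := by
  refine Integrable.mono' (g := fun _ => K) ?_ hg.aestronglyMeasurable ?_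
  · refine integrableOn_const ?_
    simp [Ioo2, Real.volume_Ioo]
  · simpa [Real.norm_eq_abs] using hb

/-- The symmetrization map as a linear map. -/
def symPart : M2 →ₗ[ℝ] M2 where
  toFun A := (2⁻¹ : ℝ) • (A + Aᵀ)
  map_add' A B := by
    simp only [Matrix.transpose_add, smul_add]
    module
  map_smul' r A := by
    simp only [Matrix.transpose_smul, RingHom.id_apply]
    rw [smul_comm, ← smul_add]

lemma symPart_isSymm (A : M2) : (symPart A).IsSymm := by
  have : (A + Aᵀ).IsSymm := by
    unfold Matrix.IsSymm
    rw [Matrix.transpose_add, Matrix.transpose_transpose, add_comm]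
  exact this.smul _

lemma symPart_of_isSymm {A : M2} (hA : A.IsSymm) : symPart A = A := by
  show (2⁻¹ : ℝ) • (A + Aᵀ) = A
  rw [hA]
  match_scalars <;> ring

/-- Pull a dot-product out of entrywise integrals. -/
lemma dot2_integral (f : ℝ → M2) (w : ℝ → ℝ) (M B : M2)
    (hM : ∀ α β : Fin 2, M α β = ∫ t in Ioo2, w t * f t α β)
    (hint : ∀ α β : Fin 2, IntegrableOn (fun t => w t * f t α β) Ioo2 volume) :
    dot2 M B = ∫ t in Ioo2, w t * dot2 (f t) B := by
  have key : ∀ t : ℝ, w t * dot2 (f t) B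
      = ∑ p : Fin 2 × Fin 2, w t * f t p.1 p.2 * B p.2 p.1 := by
    intro t
    rw [dot2_eq_sum, Finset.mul_sum, Fintype.sum_prod_type]
    simp [Finset.mul_sum, mul_assoc]
    ring
  rw [MeasureTheory.integral_congr_ae (Filter.Eventually.of_forall key),
    MeasureTheory.integral_finset_sum _
      (fun p _ => (hint p.1 p.2).mul_const (B p.2 p.1))]
  rw [dot2_eq_sum, Fintype.sum_prod_type]
  refine Finset.sum_congr rfl fun α _ => Finset.sum_congr rfl fun β _ => ?_
  rw [hM α β, ← MeasureTheory.integral_mul_const]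

lemma integrableOn_w_dot2 (f : ℝ → M2) (w : ℝ → ℝ) (B : M2)
    (hint : ∀ α β : Fin 2, IntegrableOn (fun t => w t * f t α β) Ioo2 volume) :
    IntegrableOn (fun t => w t * dot2 (f t) B) Ioo2 volume := by
  have key : ∀ t : ℝ, w t * dot2 (f t) B
      = ∑ p : Fin 2 × Fin 2, w t * f t p.1 p.2 * B p.2 p.1 := by
    intro t
    rw [dot2_eq_sum, Finset.mul_sum, Fintype.sum_prod_type]
    simp [Finset.mul_sum, mul_assoc]
    ring
  simp only [key]
  exact MeasureTheory.integrable_finset_sum _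
    (fun p _ => (hint p.1 p.2).mul_const (B p.2 p.1))

/-- The submodule of symmetric matrices. -/
def symS : Submodule ℝ M2 where
  carrier := {A | A.IsSymm}
  add_mem' h1 h2 := h1.add h2
  zero_mem' := Matrix.isSymm_zero
  smul_mem' r _ h := h.smul r

lemma mem_symS {A : M2} : A ∈ symS ↔ A.IsSymm := Iff.rfl

/-- Let `C̄ : (−1/2,1/2) → (self-adjoint maps Sym₂ → Sym₂)` be a
measurable, essentially bounded, uniformly coercive field, let `C̄⁽ⁱ⁾` (i = 0,1,2) be its
moments, `D₀` the inverse of `C̄⁽⁰⁾` on `Sym₂`, and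
`Ĉ := 12(C̄⁽²⁾ − C̄⁽¹⁾(C̄⁽⁰⁾)⁻¹C̄⁽¹⁾)`.  Then `ĈĀ·Ā ≥ c|Ā|²` for every symmetric `Ā`;
in particular `Ĉ` is positive definite and invertible on `Sym₂`. -/
theorem chat_coercive_posDef_invertible
    (Cb : ℝ → M2 →ₗ[ℝ] M2) (c : ℝ) (hc : 0 < c)
    (hmeas : ∀ (A : M2) (α β : Fin 2), Measurable fun t : ℝ => (Cb t A) α β)
    (hbd : ∃ K : ℝ, ∀ᵐ t ∂(volume.restrict Ioo2),
      ∀ (A : M2) (α β : Fin 2), |(Cb t A) α β| ≤ K * ∑ γ : Fin 2, ∑ δ : Fin 2, |A γ δ|)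
    (hsymm : ∀ t ∈ Ioo2, ∀ A : M2, A.IsSymm → (Cb t A).IsSymm)
    (hsa : ∀ t ∈ Ioo2, ∀ A B : M2, A.IsSymm → B.IsSymm →
      dot2 (Cb t A) B = dot2 A (Cb t B))
    (hcoer : ∀ᵐ t ∂(volume.restrict Ioo2), ∀ A : M2, A.IsSymm →
      c * dot2 A A ≤ dot2 (Cb t A) A)
    (C0 C1 C2 D0 : M2 →ₗ[ℝ] M2)
    (hC0 : ∀ (A : M2) (α β : Fin 2), (C0 A) α β = ∫ t in Ioo2, (Cb t A) α β)
    (hC1 : ∀ (A : M2) (α β : Fin 2), (C1 A) α β = ∫ t in Ioo2, t * (Cb t A) α β)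
    (hC2 : ∀ (A : M2) (α β : Fin 2), (C2 A) α β = ∫ t in Ioo2, t ^ 2 * (Cb t A) α β)
    (hD0symm : ∀ A : M2, A.IsSymm → (D0 A).IsSymm)
    (hD0l : ∀ A : M2, A.IsSymm → D0 (C0 A) = A)
    (hD0r : ∀ A : M2, A.IsSymm → C0 (D0 A) = A) :
    (∀ Ab : M2, Ab.IsSymm →
        c * dot2 Ab Ab ≤ dot2 ((12:ℝ) • (C2 Ab - C1 (D0 (C1 Ab)))) Ab)
    ∧ (∀ Ab : M2, Ab.IsSymm → Ab ≠ 0 →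
        0 < dot2 ((12:ℝ) • (C2 Ab - C1 (D0 (C1 Ab)))) Ab)
    ∧ (∃ Dh : M2 →ₗ[ℝ] M2, ∀ A : M2, A.IsSymm →
        (Dh A).IsSymm
        ∧ Dh ((12:ℝ) • (C2 A - C1 (D0 (C1 A)))) = A
        ∧ (12:ℝ) • (C2 (Dh A) - C1 (D0 (C1 (Dh A)))) = A) := by
  obtain ⟨K, hK⟩ := hbd
  -- integrability of weighted matrix entries
  have hw2 : ∀ w : ℝ → ℝ, Measurable w → (∀ t ∈ Ioo2, |w t| ≤ 1) →
      ∀ (A : M2) (α β : Fin 2),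
        IntegrableOn (fun t => w t * (Cb t A) α β) Ioo2 volume := by
    intro w hwm hwb A α β
    refine integrableOn_of_bound _ (hwm.mul (hmeas A α β))
      (K * ∑ γ : Fin 2, ∑ δ : Fin 2, |A γ δ|) ?_
    filter_upwards [hK, ae_restrict_mem meas_Ioo2] with t ht htm
    have h1 := ht A α β
    calc |w t * (Cb t A) α β| = |w t| * |(Cb t A) α β| := abs_mul _ _
    _ ≤ 1 * (K * ∑ γ : Fin 2, ∑ δ : Fin 2, |A γ δ|) :=
        mul_le_mul (hwb t htm) h1 (abs_nonneg _) zero_le_one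
    _ = _ := one_mul _
  have habs : ∀ t ∈ Ioo2, |t| ≤ 1 := by
    intro t ht
    obtain ⟨h1, h2⟩ := ht
    rw [abs_le]; constructor <;> [linarith; linarith]
  have hint0 := hw2 (fun _ => 1) measurable_const (by intro t _; simp)
  have hint1 := hw2 (fun t => t) measurable_id habs
  have hint2 := hw2 (fun t => t ^ 2) (measurable_id.pow_const 2)
    (by
      intro t ht
      have h := habs t ht
      have h0 := abs_nonneg t
      rw [abs_pow]
      nlinarith)
  -- dot-product moment identities
  have hd0 : ∀ X Y : M2, dot2 (C0 X) Y = ∫ t in Ioo2, dot2 (Cb t X) Y := by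
    intro X Y
    have := dot2_integral (fun t => Cb t X) (fun _ => 1) (C0 X) Y
      (fun α β => by simpa using hC0 X α β) (hint0 X)
    simpa using this
  have hd1 : ∀ X Y : M2, dot2 (C1 X) Y = ∫ t in Ioo2, t * dot2 (Cb t X) Y :=
    fun X Y => dot2_integral (fun t => Cb t X) (fun t => t) (C1 X) Y
      (fun α β => hC1 X α β) (hint1 X)
  have hd2 : ∀ X Y : M2, dot2 (C2 X) Y = ∫ t in Ioo2, t ^ 2 * dot2 (Cb t X) Y :=
    fun X Y => dot2_integral (fun t => Cb t X) (fun t => t ^ 2) (C2 X) Y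
      (fun α β => hC2 X α β) (hint2 X)
  -- the moments preserve symmetry
  have hmom_symm : ∀ (w : ℝ → ℝ) (Ci : M2 →ₗ[ℝ] M2),
      (∀ (A : M2) (α β : Fin 2), (Ci A) α β = ∫ t in Ioo2, w t * (Cb t A) α β) →
      ∀ A : M2, A.IsSymm → (Ci A).IsSymm := by
    intro w Ci hCi A hA
    unfold Matrix.IsSymm
    ext α β
    rw [Matrix.transpose_apply, hCi A α β, hCi A β α]
    refine MeasureTheory.setIntegral_congr_fun meas_Ioo2 (fun t ht => ?_)
    rw [(hsymm t ht A hA).apply α β]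
  have hC0symm := hmom_symm (fun _ => 1) C0 (fun A α β => by simpa using hC0 A α β)
  have hC1symm := hmom_symm (fun t => t) C1 hC1
  have hC2symm := hmom_symm (fun t => t ^ 2) C2 hC2
  -- key identity: dot2 (C1 B') A = dot2 (C1 A) B' for symmetric A, B'
  have hswap : ∀ A B' : M2, A.IsSymm → B'.IsSymm →
      dot2 (C1 B') A = dot2 (C1 A) B' := by
    intro A B' hA hB'
    rw [hd1, hd1]
    refine MeasureTheory.setIntegral_congr_fun meas_Ioo2 (fun t ht => ?_)
    rw [hsa t ht B' A hB' hA, dot2_comm]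
  -- main coercive estimate
  have claim1 : ∀ Ab : M2, Ab.IsSymm →
      c * dot2 Ab Ab ≤ dot2 ((12:ℝ) • (C2 Ab - C1 (D0 (C1 Ab)))) Ab := by
    intro A hA
    set B : M2 := D0 (C1 A) with hBdef
    have hC1A : (C1 A).IsSymm := hC1symm A hA
    have hBs : B.IsSymm := hD0symm _ hC1A
    have hC0B : C0 B = C1 A := hD0r _ hC1A
    set q : ℝ := dot2 (C1 A) B with hqdef
    -- pointwise expansion of the quadratic form along t • A - B
    have hexp : ∀ t : ℝ, dot2 (Cb t (t • A - B)) (t • A - B) =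
        t ^ 2 * dot2 (Cb t A) A - t * dot2 (Cb t A) B
          - t * dot2 (Cb t B) A + dot2 (Cb t B) B := by
      intro t
      rw [map_sub, _root_.map_smul]
      simp only [dot2_sub_left, dot2_sub_right, dot2_smul_left, dot2_smul_right]
      ring
    -- integrability of both sides
    have iAA := integrableOn_w_dot2 (fun t => Cb t A) (fun t => t ^ 2) A (hint2 A)
    have iAB := integrableOn_w_dot2 (fun t => Cb t A) (fun t => t) B (hint1 A)
    have iBA := integrableOn_w_dot2 (fun t => Cb t B) (fun t => t) A (hint1 B)
    have iBB : IntegrableOn (fun t => dot2 (Cb t B) B) Ioo2 volume := by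
      simpa using integrableOn_w_dot2 (fun t => Cb t B) (fun _ => 1) B (hint0 B)
    have hRint : IntegrableOn
        (fun t => dot2 (Cb t (t • A - B)) (t • A - B)) Ioo2 volume := by
      have : (fun t => dot2 (Cb t (t • A - B)) (t • A - B)) =
          fun t => t ^ 2 * dot2 (Cb t A) A - t * dot2 (Cb t A) B
            - t * dot2 (Cb t B) A + dot2 (Cb t B) B := funext hexp
      rw [this]
      exact ((iAA.sub iAB).sub iBA).add iBB
    have hLint : IntegrableOn
        (fun t => c * dot2 (t • A - B) (t • A - B)) Ioo2 volume := by
      have heq : (fun t : ℝ => c * dot2 (t • A - B) (t • A - B)) =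
          fun t : ℝ => (c * dot2 A A) * t ^ 2 + (-(2 * c * dot2 A B)) * t
            + c * dot2 B B := by
        funext t
        simp only [dot2_sub_left, dot2_sub_right, dot2_smul_left, dot2_smul_right,
          dot2_comm B A]
        ring
      rw [heq]
      refine (ContinuousOn.integrableOn_compact isCompact_Icc ?_).mono_set
        Set.Ioo_subset_Icc_self
      exact (((continuous_const.mul (continuous_pow 2)).add
        (continuous_const.mul continuous_id)).add continuous_const).continuousOn
    -- the a.e. inequality
    have hle : ∀ᵐ t ∂(volume.restrict Ioo2),
        c * dot2 (t • A - B) (t • A - B) ≤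
          dot2 (Cb t (t • A - B)) (t • A - B) := by
      filter_upwards [hcoer] with t ht
      exact ht _ ((hA.smul t).sub hBs)
    have hmono := MeasureTheory.integral_mono_ae hLint hRint hle
    -- compute the left integral
    have hL : ∫ t in Ioo2, c * dot2 (t • A - B) (t • A - B)
        = c * dot2 A A / 12 + c * dot2 B B := by
      have heq : ∀ t : ℝ, c * dot2 (t • A - B) (t • A - B) =
          (c * dot2 A A) * t ^ 2 + (-(2 * c * dot2 A B)) * t + c * dot2 B B := by
        intro t
        simp only [dot2_sub_left, dot2_sub_right, dot2_smul_left, dot2_smul_right,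
          dot2_comm B A]
        ring
      rw [MeasureTheory.integral_congr_ae (Filter.Eventually.of_forall heq), int_quad]
    -- compute the right integral
    have hR : ∫ t in Ioo2, dot2 (Cb t (t • A - B)) (t • A - B)
        = dot2 (C2 A) A - q := by
      rw [MeasureTheory.integral_congr_ae (Filter.Eventually.of_forall hexp)]
      have jAA : IntegrableOn (fun t : ℝ => t ^ 2 * dot2 (Cb t A) A) Ioo2 volume := iAA
      have jAB : IntegrableOn (fun t : ℝ => t * dot2 (Cb t A) B) Ioo2 volume := iAB
      have jBA : IntegrableOn (fun t : ℝ => t * dot2 (Cb t B) A) Ioo2 volume := iBA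
      have s1 : IntegrableOn (fun t : ℝ => t ^ 2 * dot2 (Cb t A) A
          - t * dot2 (Cb t A) B) Ioo2 volume := jAA.sub jAB
      have s2 : IntegrableOn (fun t : ℝ => t ^ 2 * dot2 (Cb t A) A
          - t * dot2 (Cb t A) B - t * dot2 (Cb t B) A) Ioo2 volume := s1.sub jBA
      rw [MeasureTheory.integral_add s2 iBB,
        MeasureTheory.integral_sub s1 jBA,
        MeasureTheory.integral_sub jAA jAB]
      rw [← hd2 A A, ← hd1 A B, ← hd1 B A, ← hd0 B B]
      rw [hswap A B hA hBs, hC0B]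
      ring
    have hBB : 0 ≤ dot2 B B := dot2_self_nonneg hBs
    have htarget : dot2 ((12:ℝ) • (C2 A - C1 B)) A
        = 12 * (dot2 (C2 A) A - q) := by
      rw [dot2_smul_left, dot2_sub_left, hswap A B hA hBs]
    rw [htarget]
    rw [hL, hR] at hmono
    nlinarith
  -- strict positivity
  have claim2 : ∀ Ab : M2, Ab.IsSymm → Ab ≠ 0 →
      0 < dot2 ((12:ℝ) • (C2 Ab - C1 (D0 (C1 Ab)))) Ab := by
    intro A hA h0
    have := claim1 A hA
    have hpos : 0 < c * dot2 A A := mul_pos hc (dot2_self_pos hA h0)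
    linarith
  refine ⟨claim1, claim2, ?_⟩
  -- invertibility
  set E : M2 →ₗ[ℝ] M2 := (12:ℝ) • (C2 - C1 ∘ₗ (D0 ∘ₗ C1)) with hEdef
  have hEapp : ∀ A : M2, E A = (12:ℝ) • (C2 A - C1 (D0 (C1 A))) := by
    intro A
    simp [hEdef, LinearMap.smul_apply, LinearMap.sub_apply, LinearMap.comp_apply]
  have hES : ∀ x ∈ symS, E x ∈ symS := by
    intro x hx
    have hx' : x.IsSymm := hx
    rw [mem_symS, hEapp]
    exact ((hC2symm x hx').sub (hC1symm _ (hD0symm _ (hC1symm x hx')))).smul _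
  set e : symS →ₗ[ℝ] symS := E.restrict hES with hedef
  have hecoe : ∀ x : symS, (e x : M2) = E (x : M2) := fun x => rfl
  have einj : Function.Injective e := by
    rw [← LinearMap.ker_eq_bot]
    rw [LinearMap.ker_eq_bot']
    intro x hx
    by_contra hx0
    have hx0' : (x : M2) ≠ 0 := fun h => hx0 (Subtype.ext h)
    have hpos := claim2 (x : M2) x.2 hx0'
    have hz : E (x : M2) = 0 := by
      rw [← hecoe, hx]; rfl
    rw [← hEapp, hz] at hpos
    simp [dot2] at hpos
  have esurj : Function.Surjective e := (LinearMap.injective_iff_surjective).mp einj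
  set ee : symS ≃ₗ[ℝ] symS := LinearEquiv.ofBijective e ⟨einj, esurj⟩ with heedef
  have heeapp : ∀ x : symS, ee x = e x := fun x => rfl
  set π : M2 →ₗ[ℝ] symS := symPart.codRestrict symS (fun A => symPart_isSymm A)
    with hπdef
  refine ⟨symS.subtype ∘ₗ (ee.symm : symS →ₗ[ℝ] symS) ∘ₗ π, ?_⟩
  intro A hA
  have hπA : π A = ⟨A, hA⟩ := Subtype.ext (symPart_of_isSymm hA)
  have hDhA : (symS.subtype ∘ₗ (ee.symm : symS →ₗ[ℝ] symS) ∘ₗ π) A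
      = ((ee.symm ⟨A, hA⟩ : symS) : M2) := by
    simp [LinearMap.comp_apply, hπA]
  refine ⟨?_, ?_, ?_⟩
  · rw [hDhA]
    exact (ee.symm ⟨A, hA⟩).2
  · -- left inverse
    have hEA : (12:ℝ) • (C2 A - C1 (D0 (C1 A))) = E A := (hEapp A).symm
    rw [hEA]
    have hπEA : π (E A) = e ⟨A, hA⟩ := Subtype.ext (by
      rw [hecoe]
      exact symPart_of_isSymm (hES A hA))
    show ((ee.symm (π (E A)) : symS) : M2) = A
    rw [hπEA, ← heeapp, ee.symm_apply_apply]
  · -- right inverse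
    set x : symS := ee.symm ⟨A, hA⟩ with hxdef
    have hDx : (symS.subtype ∘ₗ (ee.symm : symS →ₗ[ℝ] symS) ∘ₗ π) A = (x : M2) := hDhA
    rw [hDx, ← hEapp (x : M2)]
    have : E (x : M2) = (e x : M2) := rfl
    rw [this, ← heeapp, hxdef, ee.apply_symm_apply]
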